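/- With V, σ*, τ* defined by the Dynkin game backward recursion and hitting times, (σ*, τ*) is a saddle point: for all stopping times σ, τ ≤ N, E[H(σ*, τ)] ≤ E[H(σ*, τ*)] ≤ E[H(σ, τ*)], and V_0 = E[H(σ*, τ*)]. -/

import Mathlib

open MeasureTheory

namespace DynkinAux

variable {Ω : Type*} {m : MeasurableSpace Ω} {μ : Measure Ω}

lemma integrable_min {f g : Ω → ℝ} (hf : Integrable f μ) (hg : Integrable g μ) :
    Integrable (fun ω => min (f ω) (g ω)) μ := by
  have h := hf.inf hg
  refine h.congr (Filter.Eventually.of_forall fun ω => ?_)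
  simp [Pi.inf_apply]

lemma integrable_max {f g : Ω → ℝ} (hf : Integrable f μ) (hg : Integrable g μ) :
    Integrable (fun ω => max (f ω) (g ω)) μ := by
  have h := hf.sup hg
  refine h.congr (Filter.Eventually.of_forall fun ω => ?_)
  simp [Pi.sup_apply]

lemma integrable_stopped {N : ℕ} {f : ℕ → Ω → ℝ} (hfi : ∀ n, n ≤ N → Integrable (f n) μ)
    {g : Ω → ℕ} (hg : ∀ ω, g ω ≤ N) (hmg : Measurable g) :
    Integrable (fun ω => f (g ω) ω) μ := by
  have h : (fun ω => f (g ω) ω)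
      = fun ω => ∑ k ∈ Finset.range (N + 1), Set.indicator {ω | g ω = k} (f k) ω := by
    funext ω
    rw [Finset.sum_eq_single (g ω)]
    · exact (Set.indicator_of_mem (show ω ∈ {ω | g ω = g ω} from rfl) (f (g ω))).symm
    · intro k _ hk
      exact Set.indicator_of_notMem (fun h => hk h.symm) _
    · intro h
      exact absurd (Finset.mem_range.mpr (Nat.lt_succ_of_le (hg ω))) h
  rw [h]
  refine integrable_finset_sum _ fun k hk => ?_
  exact (hfi k (Nat.lt_succ_iff.mp (Finset.mem_range.mp hk))).indicator
    (hmg (measurableSet_singleton k))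

lemma measurable_of_gt_sets {ρ : Ω → ℕ} (h : ∀ n, MeasurableSet {ω | n < ρ ω}) :
    Measurable ρ := by
  apply measurable_to_countable'
  intro k
  have heq : ρ ⁻¹' {k} = {ω | k < ρ ω}ᶜ ∩ ⋂ j ∈ Finset.range k, {ω | j < ρ ω} := by
    ext ω
    simp only [Set.mem_preimage, Set.mem_singleton_iff, Set.mem_inter_iff, Set.mem_compl_iff,
      Set.mem_iInter, Set.mem_setOf_eq, Finset.mem_range, not_lt]
    constructor
    · rintro rfl; exact ⟨le_rfl, fun j hj => hj⟩
    · rintro ⟨h1, h2⟩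
      by_contra hne
      rcases lt_or_gt_of_ne hne with hlt | hgt
      · exact absurd (h2 _ hlt) (lt_irrefl _)
      · exact absurd h1 (not_le.mpr hgt)
  rw [heq]
  refine ((h k).compl).inter ?_
  refine MeasurableSet.iInter fun j => ?_
  exact MeasurableSet.iInter fun _ => h j

lemma stopped_le [IsProbabilityMeasure μ] (ℱ : Filtration ℕ m) (N : ℕ) (V : ℕ → Ω → ℝ)
    (hVi : ∀ n, n ≤ N → Integrable (V n) μ)
    (ρ : Ω → ℕ) (hρN : ∀ ω, ρ ω ≤ N) (hmρ : Measurable ρ)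
    (hρm : ∀ n, MeasurableSet[ℱ n] {ω | n < ρ ω})
    (hsup : ∀ n, n < N → ∀ᵐ ω ∂μ, n < ρ ω → (μ[V (n + 1) | ℱ n]) ω ≤ V n ω) :
    ∫ ω, V (ρ ω) ω ∂μ ≤ ∫ ω, V 0 ω ∂μ := by
  have hstop : ∀ k, k ≤ N → Integrable (fun ω => V (min (ρ ω) k) ω) μ := by
    intro k _
    exact integrable_stopped hVi (fun ω => le_trans (min_le_left _ _) (hρN ω))
      (hmρ.min measurable_const)
  have key : ∀ n, n ≤ N → ∫ ω, V (min (ρ ω) n) ω ∂μ ≤ ∫ ω, V 0 ω ∂μ := by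
    intro n
    induction n with
    | zero => intro _; simp
    | succ n ih =>
      intro hn1
      have hn : n < N := hn1
      have hnN : n ≤ N := hn.le
      have hA : MeasurableSet[ℱ n] {ω | n < ρ ω} := hρm n
      have hAm : MeasurableSet {ω | n < ρ ω} := ℱ.le n _ hA
      have hdec : (fun ω => V (min (ρ ω) (n + 1)) ω)
          = fun ω => V (min (ρ ω) n) ω
              + Set.indicator {ω | n < ρ ω} (fun ω => V (n + 1) ω - V n ω) ω := by
        funext ω
        by_cases h : n < ρ ω
        · rw [Set.indicator_of_mem (show ω ∈ {ω | n < ρ ω} from h),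
            min_eq_right (Nat.succ_le_of_lt h), min_eq_right (le_of_lt h)]
          ring
        · have h' : ρ ω ≤ n := Nat.le_of_not_lt h
          rw [Set.indicator_of_notMem (show ω ∉ {ω | n < ρ ω} from h), min_eq_left h',
            min_eq_left (h'.trans (Nat.le_succ n))]
          ring
      have hind : Integrable (Set.indicator {ω | n < ρ ω} (fun ω => V (n + 1) ω - V n ω)) μ :=
        ((hVi (n + 1) hn1).sub (hVi n hnN)).indicator hAm
      have hsplit : ∫ ω, V (min (ρ ω) (n + 1)) ω ∂μ
          = ∫ ω, V (min (ρ ω) n) ω ∂μ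
            + ∫ ω, Set.indicator {ω | n < ρ ω} (fun ω => V (n + 1) ω - V n ω) ω ∂μ := by
        rw [hdec, integral_add (hstop n hnN) hind]
      have hneg : ∫ ω, Set.indicator {ω | n < ρ ω} (fun ω => V (n + 1) ω - V n ω) ω ∂μ ≤ 0 := by
        rw [integral_indicator hAm]
        have h1 : ∫ ω in {ω | n < ρ ω}, (V (n + 1) ω - V n ω) ∂μ
            = ∫ ω in {ω | n < ρ ω}, V (n + 1) ω ∂μ - ∫ ω in {ω | n < ρ ω}, V n ω ∂μ :=
          integral_sub ((hVi (n + 1) hn1).restrict) ((hVi n hnN).restrict)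
        have h2 : ∫ ω in {ω | n < ρ ω}, V (n + 1) ω ∂μ
            = ∫ ω in {ω | n < ρ ω}, (μ[V (n + 1) | ℱ n]) ω ∂μ :=
          (setIntegral_condExp (ℱ.le n) (hVi (n + 1) hn1) hA).symm
        have h3 : ∫ ω in {ω | n < ρ ω}, (μ[V (n + 1) | ℱ n]) ω ∂μ
            ≤ ∫ ω in {ω | n < ρ ω}, V n ω ∂μ := by
          refine setIntegral_mono_ae_restrict (integrable_condExp.restrict) ((hVi n hnN).restrict) ?_
          rw [Filter.EventuallyLE, ae_restrict_iff' hAm]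
          filter_upwards [hsup n hn] with ω h hmem using h hmem
        rw [h1, h2]
        linarith
      have := ih hnN
      rw [hsplit]
      linarith
  have heq : (fun ω => V (ρ ω) ω) = fun ω => V (min (ρ ω) N) ω := by
    funext ω; rw [min_eq_left (hρN ω)]
  rw [heq]
  exact key N le_rfl

lemma stopped_ge [IsProbabilityMeasure μ] (ℱ : Filtration ℕ m) (N : ℕ) (V : ℕ → Ω → ℝ)
    (hVi : ∀ n, n ≤ N → Integrable (V n) μ)
    (ρ : Ω → ℕ) (hρN : ∀ ω, ρ ω ≤ N) (hmρ : Measurable ρ)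
    (hρm : ∀ n, MeasurableSet[ℱ n] {ω | n < ρ ω})
    (hsub : ∀ n, n < N → ∀ᵐ ω ∂μ, n < ρ ω → V n ω ≤ (μ[V (n + 1) | ℱ n]) ω) :
    ∫ ω, V 0 ω ∂μ ≤ ∫ ω, V (ρ ω) ω ∂μ := by
  have h := stopped_le ℱ N (fun n ω => -V n ω) (fun n hn => (hVi n hn).neg) ρ hρN hmρ hρm ?_
  · have h1 : ∫ ω, -V (ρ ω) ω ∂μ ≤ ∫ ω, -V 0 ω ∂μ := h
    rw [integral_neg, integral_neg] at h1
    linarith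
  · intro n hn
    have hcn : μ[-V (n + 1) | ℱ n] =ᵐ[μ] -μ[V (n + 1) | ℱ n] := condExp_neg (V (n + 1)) (ℱ n)
    filter_upwards [hsub n hn, hcn] with ω h1 h2 hlt
    show (μ[(fun ω => -V (n + 1) ω) | ℱ n]) ω ≤ -V n ω
    have hfun : (fun ω => -V (n + 1) ω) = -V (n + 1) := rfl
    rw [hfun, h2, Pi.neg_apply]
    linarith [h1 hlt]

end DynkinAux

/-- With `V`, `σ*`, `τ*` defined by the Dynkin game backward recursion and
hitting times, `(σ*, τ*)` is a saddle point:
`E[H(σ*, τ)] ≤ E[H(σ*, τ*)] ≤ E[H(σ, τ*)]` for all stopping times `σ, τ ≤ N`, and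
`V_0 = E[H(σ*, τ*)]`, where `H(s,t) = X_s 1_{s<t} + Y_t 1_{t≤s}`. -/
theorem dynkin_saddle_point {Ω : Type*} {m : MeasurableSpace Ω} {μ : Measure Ω}
    [IsProbabilityMeasure μ] (ℱ : Filtration ℕ m) (N : ℕ) (X Y V : ℕ → Ω → ℝ)
    (hX : Adapted ℱ X) (hY : Adapted ℱ Y)
    (hXi : ∀ n, Integrable (X n) μ) (hYi : ∀ n, Integrable (Y n) μ)
    (hord : ∀ n < N, ∀ ω, Y n ω ≤ X n ω) (hterm : X N = Y N)
    (hVN : V N = X N)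
    (hVrec : ∀ n < N, V n = fun ω => min (X n ω) (max (Y n ω) ((μ[V (n + 1) | ℱ n]) ω)))
    (σs τs : Ω → ℕ)
    (hσ : ∀ ω, σs ω = sInf {n | V n ω = X n ω})
    (hτ : ∀ ω, τs ω = sInf {n | V n ω = Y n ω}) :
    (∀ σ τ : Ω → ℕ, IsStoppingTime ℱ (fun ω => (σ ω : WithTop ℕ)) → IsStoppingTime ℱ (fun ω => (τ ω : WithTop ℕ)) →
      (∀ ω, σ ω ≤ N) → (∀ ω, τ ω ≤ N) →
      (∫ ω, (if σs ω < τ ω then X (σs ω) ω else Y (τ ω) ω) ∂μ) ≤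
        (∫ ω, (if σs ω < τs ω then X (σs ω) ω else Y (τs ω) ω) ∂μ) ∧
      (∫ ω, (if σs ω < τs ω then X (σs ω) ω else Y (τs ω) ω) ∂μ) ≤
        (∫ ω, (if σ ω < τs ω then X (σ ω) ω else Y (τs ω) ω) ∂μ)) ∧
    (∫ ω, V 0 ω ∂μ) = ∫ ω, (if σs ω < τs ω then X (σs ω) ω else Y (τs ω) ω) ∂μ := by
  classical
  -- pointwise bounds
  have hVX : ∀ n, n ≤ N → ∀ ω, V n ω ≤ X n ω := by
    intro n hn ω
    rcases eq_or_lt_of_le hn with h | h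
    · rw [h, hVN]
    · rw [hVrec n h]; exact min_le_left _ _
  have hYV : ∀ n, n ≤ N → ∀ ω, Y n ω ≤ V n ω := by
    intro n hn ω
    rcases eq_or_lt_of_le hn with h | h
    · rw [h, hVN, hterm]
    · rw [hVrec n h]; exact le_min (hord n h ω) (le_max_left _ _)
  -- integrability and measurability of V on [0, N]
  have hVIM : ∀ d n, n + d = N → Integrable (V n) μ ∧ Measurable[ℱ n] (V n) := by
    intro d
    induction d with
    | zero =>
      intro n h
      rw [Nat.add_zero] at h
      subst h
      rw [hVN]
      exact ⟨hXi _, (hX _)⟩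
    | succ d ih =>
      intro n h
      have hn : n < N := by omega
      rw [hVrec n hn]
      refine ⟨?_, ?_⟩
      · exact DynkinAux.integrable_min (hXi n)
          (DynkinAux.integrable_max (hYi n) integrable_condExp)
      · exact (hX n).min
          (((hY n)).max stronglyMeasurable_condExp.measurable)
  have hVi : ∀ n, n ≤ N → Integrable (V n) μ := fun n hn => (hVIM (N - n) n (by omega)).1
  have hVm : ∀ n, n ≤ N → Measurable[ℱ n] (V n) := fun n hn => (hVIM (N - n) n (by omega)).2
  -- hitting time facts
  have hσmemN : ∀ ω, N ∈ {n | V n ω = X n ω} := fun ω => congrFun hVN ω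
  have hτmemN : ∀ ω, N ∈ {n | V n ω = Y n ω} := fun ω => by
    show V N ω = Y N ω
    rw [hVN, hterm]
  have hσN : ∀ ω, σs ω ≤ N := fun ω => by rw [hσ ω]; exact Nat.sInf_le (hσmemN ω)
  have hτN : ∀ ω, τs ω ≤ N := fun ω => by rw [hτ ω]; exact Nat.sInf_le (hτmemN ω)
  have hσval : ∀ ω, V (σs ω) ω = X (σs ω) ω := fun ω => by
    have h := Nat.sInf_mem (⟨N, hσmemN ω⟩ : Set.Nonempty {n | V n ω = X n ω})
    rw [hσ ω]; exact h
  have hτval : ∀ ω, V (τs ω) ω = Y (τs ω) ω := fun ω => by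
    have h := Nat.sInf_mem (⟨N, hτmemN ω⟩ : Set.Nonempty {n | V n ω = Y n ω})
    rw [hτ ω]; exact h
  have hσlt : ∀ n ω, n < σs ω → V n ω ≠ X n ω := fun n ω h => by
    rw [hσ ω] at h; exact Nat.notMem_of_lt_sInf h
  have hτlt : ∀ n ω, n < τs ω → V n ω ≠ Y n ω := fun n ω h => by
    rw [hτ ω] at h; exact Nat.notMem_of_lt_sInf h
  -- measurability of the hitting-time level sets
  have hσset : ∀ n, MeasurableSet[ℱ n] {ω | n < σs ω} := by
    intro n
    by_cases hnN : n < N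
    · have heq : {ω | n < σs ω} = ⋂ k ∈ Finset.range (n + 1), {ω | V k ω = X k ω}ᶜ := by
        ext ω
        simp only [Set.mem_setOf_eq, Set.mem_iInter, Set.mem_compl_iff, Finset.mem_range,
          Nat.lt_succ_iff]
        constructor
        · intro h k hk; exact hσlt k ω (lt_of_le_of_lt hk h)
        · intro h
          by_contra hc
          push_neg at hc
          exact h (σs ω) hc (hσval ω)
      rw [heq]
      refine MeasurableSet.iInter fun k => MeasurableSet.iInter fun hk => ?_
      have hk' : k ≤ n := Nat.lt_succ_iff.mp (Finset.mem_range.mp hk)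
      have hkN : k ≤ N := le_of_lt (lt_of_le_of_lt hk' hnN)
      have hset : MeasurableSet[ℱ k] {ω | V k ω = X k ω} :=
        measurableSet_eq_fun (hVm k hkN) (hX k)
      exact ℱ.mono hk' _ hset.compl
    · have heq : {ω | n < σs ω} = ∅ := by
        ext ω
        simp only [Set.mem_setOf_eq, Set.mem_empty_iff_false, iff_false, not_lt]
        exact le_trans (hσN ω) (le_of_not_gt hnN)
      rw [heq]; exact @MeasurableSet.empty _ (ℱ n)
  have hτset : ∀ n, MeasurableSet[ℱ n] {ω | n < τs ω} := by
    intro n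
    by_cases hnN : n < N
    · have heq : {ω | n < τs ω} = ⋂ k ∈ Finset.range (n + 1), {ω | V k ω = Y k ω}ᶜ := by
        ext ω
        simp only [Set.mem_setOf_eq, Set.mem_iInter, Set.mem_compl_iff, Finset.mem_range,
          Nat.lt_succ_iff]
        constructor
        · intro h k hk; exact hτlt k ω (lt_of_le_of_lt hk h)
        · intro h
          by_contra hc
          push_neg at hc
          exact h (τs ω) hc (hτval ω)
      rw [heq]
      refine MeasurableSet.iInter fun k => MeasurableSet.iInter fun hk => ?_
      have hk' : k ≤ n := Nat.lt_succ_iff.mp (Finset.mem_range.mp hk)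
      have hkN : k ≤ N := le_of_lt (lt_of_le_of_lt hk' hnN)
      have hset : MeasurableSet[ℱ k] {ω | V k ω = Y k ω} :=
        measurableSet_eq_fun (hVm k hkN) (hY k)
      exact ℱ.mono hk' _ hset.compl
    · have heq : {ω | n < τs ω} = ∅ := by
        ext ω
        simp only [Set.mem_setOf_eq, Set.mem_empty_iff_false, iff_false, not_lt]
        exact le_trans (hτN ω) (le_of_not_gt hnN)
      rw [heq]; exact @MeasurableSet.empty _ (ℱ n)
  have hmσ : Measurable σs :=
    DynkinAux.measurable_of_gt_sets fun n => ℱ.le n _ (hσset n)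
  have hmτs : Measurable τs :=
    DynkinAux.measurable_of_gt_sets fun n => ℱ.le n _ (hτset n)
  -- martingale conditions
  have hEcond_ge : ∀ n, n < N → ∀ ω, n < σs ω → (μ[V (n + 1) | ℱ n]) ω ≤ V n ω := by
    intro n hn ω hlt
    have h1 := congrFun (hVrec n hn) ω
    rcases min_cases (X n ω) (max (Y n ω) ((μ[V (n + 1) | ℱ n]) ω)) with ⟨he, _⟩ | ⟨he, _⟩
    · exact absurd (h1.trans he) (hσlt n ω hlt)
    · rw [h1.trans he]; exact le_max_right _ _
  have hEcond_le : ∀ n, n < N → ∀ ω, n < τs ω → V n ω ≤ (μ[V (n + 1) | ℱ n]) ω := by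
    intro n hn ω hlt
    have h1 := congrFun (hVrec n hn) ω
    have hYne : V n ω ≠ Y n ω := hτlt n ω hlt
    rcases max_cases (Y n ω) ((μ[V (n + 1) | ℱ n]) ω) with ⟨he, _⟩ | ⟨he, _⟩
    · rw [he] at h1
      exact absurd (h1.trans (min_eq_right (hord n hn ω))) hYne
    · rw [he] at h1
      exact h1.le.trans (min_le_right _ _)
  have hτgt : ∀ (τ : Ω → ℕ), IsStoppingTime ℱ (fun ω => (τ ω : WithTop ℕ)) → ∀ n, MeasurableSet[ℱ n] {ω | n < τ ω} := by
    intro τ hst n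
    have heq : {ω | n < τ ω} = {ω | (τ ω : WithTop ℕ) ≤ (n : WithTop ℕ)}ᶜ := by
      ext ω; simp [not_le]
    rw [heq]; exact (hst n).compl
  -- the equality part
  have hHstar : ∀ ω, (if σs ω < τs ω then X (σs ω) ω else Y (τs ω) ω)
      = V (min (σs ω) (τs ω)) ω := by
    intro ω
    by_cases h : σs ω < τs ω
    · rw [if_pos h, min_eq_left h.le, hσval ω]
    · rw [if_neg h, min_eq_right (Nat.le_of_not_lt h), hτval ω]
  have hρ0N : ∀ ω, min (σs ω) (τs ω) ≤ N := fun ω => le_trans (min_le_left _ _) (hσN ω)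
  have hmρ0 : Measurable (fun ω => min (σs ω) (τs ω)) := hmσ.min hmτs
  have hρ0set : ∀ n, MeasurableSet[ℱ n] {ω | n < min (σs ω) (τs ω)} := by
    intro n
    have heq : {ω | n < min (σs ω) (τs ω)} = {ω | n < σs ω} ∩ {ω | n < τs ω} := by
      ext ω; simp [lt_min_iff]
    rw [heq]; exact (hσset n).inter (hτset n)
  have hEq0 : ∫ ω, V (min (σs ω) (τs ω)) ω ∂μ = ∫ ω, V 0 ω ∂μ := by
    apply le_antisymm
    · exact DynkinAux.stopped_le ℱ N V hVi _ hρ0N hmρ0 hρ0set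
        (fun n hn => Filter.Eventually.of_forall fun ω hlt =>
          hEcond_ge n hn ω (lt_min_iff.mp hlt).1)
    · exact DynkinAux.stopped_ge ℱ N V hVi _ hρ0N hmρ0 hρ0set
        (fun n hn => Filter.Eventually.of_forall fun ω hlt =>
          hEcond_le n hn ω (lt_min_iff.mp hlt).2)
  have hfinal : (∫ ω, V 0 ω ∂μ) = ∫ ω, (if σs ω < τs ω then X (σs ω) ω else Y (τs ω) ω) ∂μ := by
    rw [← hEq0]
    exact integral_congr_ae (Filter.Eventually.of_forall fun ω => (hHstar ω).symm)
  refine ⟨fun σ τ hσst hτst hσle hτle => ?_, hfinal⟩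
  have hmτ : Measurable τ := DynkinAux.measurable_of_gt_sets fun n => ℱ.le n _ (hτgt τ hτst n)
  have hmσ' : Measurable σ := DynkinAux.measurable_of_gt_sets fun n => ℱ.le n _ (hτgt σ hσst n)
  constructor
  · -- E[H(σ*, τ)] ≤ E[H(σ*, τ*)]
    rw [← hfinal]
    set ρ := fun ω => min (σs ω) (τ ω) with hρdef
    have hρN : ∀ ω, ρ ω ≤ N := fun ω => le_trans (min_le_left _ _) (hσN ω)
    have hmρ : Measurable ρ := hmσ.min hmτ
    have hρset : ∀ n, MeasurableSet[ℱ n] {ω | n < ρ ω} := by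
      intro n
      have heq : {ω | n < ρ ω} = {ω | n < σs ω} ∩ {ω | n < τ ω} := by
        ext ω; simp [ρ, lt_min_iff]
      rw [heq]; exact (hσset n).inter (hτgt τ hτst n)
    have hle : ∫ ω, V (ρ ω) ω ∂μ ≤ ∫ ω, V 0 ω ∂μ :=
      DynkinAux.stopped_le ℱ N V hVi ρ hρN hmρ hρset
        (fun n hn => Filter.Eventually.of_forall fun ω hlt =>
          hEcond_ge n hn ω (lt_min_iff.mp hlt).1)
    refine le_trans ?_ hle
    have hintH : Integrable (fun ω => if σs ω < τ ω then X (σs ω) ω else Y (τ ω) ω) μ := by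
      have hs : MeasurableSet {ω | σs ω < τ ω} := measurableSet_lt hmσ hmτ
      have h1 : Integrable (fun ω => X (σs ω) ω) μ :=
        DynkinAux.integrable_stopped (fun n _ => hXi n) hσN hmσ
      have h2 : Integrable (fun ω => Y (τ ω) ω) μ :=
        DynkinAux.integrable_stopped (fun n _ => hYi n) hτle hmτ
      have heq : (fun ω => if σs ω < τ ω then X (σs ω) ω else Y (τ ω) ω)
          = fun ω => Set.indicator {ω | σs ω < τ ω} (fun ω => X (σs ω) ω) ω
              + Set.indicator {ω | σs ω < τ ω}ᶜ (fun ω => Y (τ ω) ω) ω := by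
        funext ω
        by_cases h : σs ω < τ ω
        · rw [if_pos h, Set.indicator_of_mem (show ω ∈ {ω | σs ω < τ ω} from h),
            Set.indicator_of_notMem (show ω ∉ {ω | σs ω < τ ω}ᶜ from fun hc => hc h) _]
          ring
        · rw [if_neg h, Set.indicator_of_notMem (show ω ∉ {ω | σs ω < τ ω} from h),
            Set.indicator_of_mem (show ω ∈ {ω | σs ω < τ ω}ᶜ from h)]
          ring
      rw [heq]
      exact (h1.indicator hs).add (h2.indicator hs.compl)
    have hintV : Integrable (fun ω => V (ρ ω) ω) μ :=
      DynkinAux.integrable_stopped hVi hρN hmρ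
    refine integral_mono hintH hintV fun ω => ?_
    by_cases h : σs ω < τ ω
    · simp only [if_pos h]
      have hρeq : ρ ω = σs ω := min_eq_left h.le
      rw [hρeq, hσval ω]
    · simp only [if_neg h]
      have hρeq : ρ ω = τ ω := min_eq_right (Nat.le_of_not_lt h)
      rw [hρeq]
      exact hYV (τ ω) (hτle ω) ω
  · -- E[H(σ*, τ*)] ≤ E[H(σ, τ*)]
    rw [← hfinal]
    set ρ := fun ω => min (σ ω) (τs ω) with hρdef
    have hρN : ∀ ω, ρ ω ≤ N := fun ω => le_trans (min_le_left _ _) (hσle ω)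
    have hmρ : Measurable ρ := hmσ'.min hmτs
    have hρset : ∀ n, MeasurableSet[ℱ n] {ω | n < ρ ω} := by
      intro n
      have heq : {ω | n < ρ ω} = {ω | n < σ ω} ∩ {ω | n < τs ω} := by
        ext ω; simp [ρ, lt_min_iff]
      rw [heq]; exact (hτgt σ hσst n).inter (hτset n)
    have hge : ∫ ω, V 0 ω ∂μ ≤ ∫ ω, V (ρ ω) ω ∂μ :=
      DynkinAux.stopped_ge ℱ N V hVi ρ hρN hmρ hρset
        (fun n hn => Filter.Eventually.of_forall fun ω hlt =>
          hEcond_le n hn ω (lt_min_iff.mp hlt).2)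
    refine le_trans hge ?_
    have hintH : Integrable (fun ω => if σ ω < τs ω then X (σ ω) ω else Y (τs ω) ω) μ := by
      have hs : MeasurableSet {ω | σ ω < τs ω} := measurableSet_lt hmσ' hmτs
      have h1 : Integrable (fun ω => X (σ ω) ω) μ :=
        DynkinAux.integrable_stopped (fun n _ => hXi n) hσle hmσ'
      have h2 : Integrable (fun ω => Y (τs ω) ω) μ :=
        DynkinAux.integrable_stopped (fun n _ => hYi n) hτN hmτs
      have heq : (fun ω => if σ ω < τs ω then X (σ ω) ω else Y (τs ω) ω)
          = fun ω => Set.indicator {ω | σ ω < τs ω} (fun ω => X (σ ω) ω) ω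
              + Set.indicator {ω | σ ω < τs ω}ᶜ (fun ω => Y (τs ω) ω) ω := by
        funext ω
        by_cases h : σ ω < τs ω
        · rw [if_pos h, Set.indicator_of_mem (show ω ∈ {ω | σ ω < τs ω} from h),
            Set.indicator_of_notMem (show ω ∉ {ω | σ ω < τs ω}ᶜ from fun hc => hc h) _]
          ring
        · rw [if_neg h, Set.indicator_of_notMem (show ω ∉ {ω | σ ω < τs ω} from h),
            Set.indicator_of_mem (show ω ∈ {ω | σ ω < τs ω}ᶜ from h)]
          ring
      rw [heq]
      exact (h1.indicator hs).add (h2.indicator hs.compl)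
    have hintV : Integrable (fun ω => V (ρ ω) ω) μ :=
      DynkinAux.integrable_stopped hVi hρN hmρ
    refine integral_mono hintV hintH fun ω => ?_
    by_cases h : σ ω < τs ω
    · simp only [if_pos h]
      have hρeq : ρ ω = σ ω := min_eq_left h.le
      rw [hρeq]
      exact hVX (σ ω) (hσle ω) ω
    · simp only [if_neg h]
      have hρeq : ρ ω = τs ω := min_eq_right (Nat.le_of_not_lt h)
      rw [hρeq, hτval ω]
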